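/- For every nonzero t ∈ Γ, every homogeneous derivation d of degree t from 𝔏 to 𝔏 ⊗ 𝔏 is inner; more precisely, for an even such derivation d_t, d_t(x) = x ∘ (−d_t(L_0)/t) for all x ∈ 𝔏. -/

import Mathlib

open Finsupp

/-- Basis of the generalized super W-algebra 𝔏 (indices range over ℝ;
the actual algebra 𝔏 has indices restricted to Γ resp. s+Γ, see `good`). -/
inductive BasisL : Type
  | L : ℝ → BasisL
  | I : ℝ → BasisL
  | G : ℝ → BasisL
  | H : ℝ → BasisL

noncomputable instance : DecidableEq BasisL := Classical.decEq _

/-- The ambient free ℂ-module on the basis. -/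
abbrev LL : Type := BasisL →₀ ℂ
/-- Model for 𝔏 ⊗ 𝔏 : free module on pairs of basis elements. -/
abbrev VV : Type := (BasisL × BasisL) →₀ ℂ
/-- Model for 𝔏 ⊗ 𝔏 ⊗ 𝔏. -/
abbrev WW : Type := (BasisL × BasisL × BasisL) →₀ ℂ

noncomputable def bL (p : ℝ) : LL := Finsupp.single (BasisL.L p) 1
noncomputable def bI (p : ℝ) : LL := Finsupp.single (BasisL.I p) 1
noncomputable def bG (r : ℝ) : LL := Finsupp.single (BasisL.G r) 1
noncomputable def bH (r : ℝ) : LL := Finsupp.single (BasisL.H r) 1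

/-- Parity (0 = even, 1 = odd). -/
def pN : BasisL → ℕ
  | BasisL.L _ => 0
  | BasisL.I _ => 0
  | BasisL.G _ => 1
  | BasisL.H _ => 1

/-- Z_s-degree of a basis element. -/
def degB : BasisL → ℝ
  | BasisL.L p => p
  | BasisL.I p => p
  | BasisL.G r => r
  | BasisL.H r => r

/-- Membership of a basis element in the actual algebra 𝔏 :
L_p, I_p for p ∈ Γ and G_r, H_r for r ∈ s + Γ. -/
def good (Γ : AddSubgroup ℝ) (s : ℝ) : BasisL → Prop
  | BasisL.L p => p ∈ Γ
  | BasisL.I p => p ∈ Γ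
  | BasisL.G r => r - s ∈ Γ
  | BasisL.H r => r - s ∈ Γ

/-- The super-bracket on basis elements (extended by super skew-symmetry). -/
noncomputable def bb : BasisL → BasisL → LL
  | BasisL.L p, BasisL.L q => ((p - q : ℝ) : ℂ) • bL (p + q)
  | BasisL.L p, BasisL.I q => ((p - q : ℝ) : ℂ) • bI (p + q)
  | BasisL.I p, BasisL.L q => ((p - q : ℝ) : ℂ) • bI (p + q)
  | BasisL.L p, BasisL.G r => ((p / 2 - r : ℝ) : ℂ) • bG (p + r)
  | BasisL.G r, BasisL.L p => ((-(p / 2 - r) : ℝ) : ℂ) • bG (p + r)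
  | BasisL.L p, BasisL.H r => ((p / 2 - r : ℝ) : ℂ) • bH (p + r)
  | BasisL.H r, BasisL.L p => ((-(p / 2 - r) : ℝ) : ℂ) • bH (p + r)
  | BasisL.G r, BasisL.G t => bI (r + t)
  | BasisL.I p, BasisL.G r => ((p - 2 * r : ℝ) : ℂ) • bH (p + r)
  | BasisL.G r, BasisL.I p => ((-(p - 2 * r) : ℝ) : ℂ) • bH (p + r)
  | _, _ => 0

/-- The super-bracket, extended bilinearly. -/
noncomputable def br (x y : LL) : LL :=
  x.sum fun a ca => y.sum fun b cb => (ca * cb) • bb a b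

/-- u ⊗ b for u ∈ 𝔏, b a basis element. -/
noncomputable def tenL (u : LL) (b : BasisL) : VV :=
  u.sum fun a ca => Finsupp.single (a, b) ca

/-- a ⊗ u for a a basis element, u ∈ 𝔏. -/
noncomputable def tenR (a : BasisL) (u : LL) : VV :=
  u.sum fun b cb => Finsupp.single (a, b) cb

/-- Super adjoint diagonal action of a basis element on a ⊗ b :
c ∘ (a ⊗ b) = [c,a] ⊗ b + (−1)^{[c][a]} a ⊗ [c,b]. -/
noncomputable def actB (c a b : BasisL) : VV :=
  tenL (bb c a) b + ((-1 : ℂ) ^ (pN c * pN a)) • tenR a (bb c b)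

/-- Super adjoint diagonal action of x ∈ 𝔏 on u ∈ 𝔏 ⊗ 𝔏. -/
noncomputable def act (x : LL) (u : VV) : VV :=
  x.sum fun c cc => u.sum fun ab cab => (cc * cab) • actB c ab.1 ab.2

/-- The super-twist τ(a ⊗ b) = (−1)^{[a][b]} b ⊗ a. -/
noncomputable def tauV (u : VV) : VV :=
  u.sum fun ab c => (((-1 : ℂ) ^ (pN ab.1 * pN ab.2)) * c) • Finsupp.single (ab.2, ab.1) (1 : ℂ)

noncomputable def t1 (u : LL) (b c : BasisL) : WW :=
  u.sum fun a ca => Finsupp.single (a, b, c) ca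
noncomputable def t2 (a : BasisL) (u : LL) (c : BasisL) : WW :=
  u.sum fun b cb => Finsupp.single (a, b, c) cb
noncomputable def t3 (a b : BasisL) (u : LL) : WW :=
  u.sum fun c cc => Finsupp.single (a, b, c) cc
noncomputable def t23 (a : BasisL) (u : VV) : WW :=
  u.sum fun bc x => Finsupp.single (a, bc.1, bc.2) x

/-- c(r) = [r¹²,r¹³] + [r¹²,r²³] + [r¹³,r²³] ∈ 𝔏⊗𝔏⊗𝔏. -/
noncomputable def cYB (r : VV) : WW :=
  r.sum fun ab x => r.sum fun ab' y =>
    (x * y) •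
      (((-1 : ℂ) ^ (pN ab'.1 * pN ab.2)) • t1 (bb ab.1 ab'.1) ab.2 ab'.2
        + t2 ab.1 (bb ab.2 ab'.1) ab'.2
        + ((-1 : ℂ) ^ (pN ab'.1 * pN ab.2)) • t3 ab.1 ab'.1 (bb ab.2 ab'.2))

/-- Super adjoint diagonal action of a basis element on a ⊗ b ⊗ c. -/
noncomputable def act3B (d a b c : BasisL) : WW :=
  t1 (bb d a) b c + ((-1 : ℂ) ^ (pN d * pN a)) • t2 a (bb d b) c
    + ((-1 : ℂ) ^ (pN d * (pN a + pN b))) • t3 a b (bb d c)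

/-- Super adjoint diagonal action of x ∈ 𝔏 on 𝔏⊗𝔏⊗𝔏. -/
noncomputable def act3 (x : LL) (u : WW) : WW :=
  x.sum fun d cd => u.sum fun abc cu => (cd * cu) • act3B d abc.1 abc.2.1 abc.2.2

/-- The super-cyclic map ξ(a⊗b⊗c) = (−1)^{[a]([b]+[c])} b⊗c⊗a. -/
noncomputable def xiW (u : WW) : WW :=
  u.sum fun abc x =>
    (((-1 : ℂ) ^ (pN abc.1 * (pN abc.2.1 + pN abc.2.2))) * x) •
      Finsupp.single (abc.2.1, abc.2.2, abc.1) (1 : ℂ)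

/-- (1 ⊗ Δ) applied to an element of 𝔏⊗𝔏. -/
noncomputable def oneTensor (D : LL →ₗ[ℂ] VV) (u : VV) : WW :=
  u.sum fun ab c => c • t23 ab.1 (D (Finsupp.single ab.2 1))

/-- x ∈ 𝔏 (support consists of good basis elements). -/
def inL (Γ : AddSubgroup ℝ) (s : ℝ) (x : LL) : Prop :=
  ∀ a ∈ x.support, good Γ s a

/-- u ∈ 𝔏 ⊗ 𝔏. -/
def inV (Γ : AddSubgroup ℝ) (s : ℝ) (u : VV) : Prop :=
  ∀ ab ∈ u.support, good Γ s ab.1 ∧ good Γ s ab.2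

/-- x ∈ 𝔏_p, the homogeneous component of degree p. -/
def inComp (Γ : AddSubgroup ℝ) (s : ℝ) (p : ℝ) (x : LL) : Prop :=
  ∀ a ∈ x.support, good Γ s a ∧ degB a = p

/-- u ∈ 𝔙_r = ⊕_{p+q=r} 𝔏_p ⊗ 𝔏_q. -/
def inCompV (Γ : AddSubgroup ℝ) (s : ℝ) (r : ℝ) (u : VV) : Prop :=
  ∀ ab ∈ u.support, good Γ s ab.1 ∧ good Γ s ab.2 ∧ degB ab.1 + degB ab.2 = r

/-- x is ℤ₂-homogeneous of parity i. -/
def IsHomogP (x : LL) (i : ℕ) : Prop :=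
  ∀ a ∈ x.support, pN a % 2 = i % 2

/-- u ∈ 𝔏⊗𝔏 is ℤ₂-homogeneous of parity i. -/
def IsHomogVP (u : VV) (i : ℕ) : Prop :=
  ∀ ab ∈ u.support, (pN ab.1 + pN ab.2) % 2 = i % 2

/-- d : 𝔏 → 𝔏⊗𝔏 is a homogeneous derivation of parity ι (for the super
adjoint diagonal action):
d([x,y]) = (−1)^{[d][x]} x∘d(y) − (−1)^{[y]([d]+[x])} y∘d(x). -/
def IsDer (Γ : AddSubgroup ℝ) (s : ℝ) (ι : ℕ) (d : LL →ₗ[ℂ] VV) : Prop :=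
  (∀ x, inL Γ s x → inV Γ s (d x)) ∧
  (∀ (i : ℕ) (x : LL), inL Γ s x → IsHomogP x i → IsHomogVP (d x) (i + ι)) ∧
  ∀ (i j : ℕ) (x y : LL), inL Γ s x → inL Γ s y → IsHomogP x i → IsHomogP y j →
    d (br x y)
      = ((-1 : ℂ) ^ (ι * i)) • act x (d y) - ((-1 : ℂ) ^ (j * (ι + i))) • act y (d x)

/-- d has degree t : d(𝔏_p) ⊆ 𝔙_{p+t}. -/
def HasDeg (Γ : AddSubgroup ℝ) (s : ℝ) (t : ℝ) (d : LL →ₗ[ℂ] VV) : Prop :=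
  ∀ (p : ℝ) (x : LL), inComp Γ s p x → inCompV Γ s (p + t) (d x)

/-! ### Auxiliary lemmas -/

lemma bb_L0 (a : BasisL) :
    bb (BasisL.L 0) a = ((-degB a : ℝ) : ℂ) • Finsupp.single a 1 := by
  cases a <;> simp [bb, bL, bI, bG, bH, degB, zero_sub, zero_add, zero_div]

lemma tenL_single (a b : BasisL) (c : ℂ) :
    tenL (Finsupp.single a c) b = Finsupp.single (a, b) c := by
  simp [tenL, Finsupp.sum_single_index]

lemma tenR_single (a b : BasisL) (c : ℂ) :
    tenR a (Finsupp.single b c) = Finsupp.single (a, b) c := by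
  simp [tenR, Finsupp.sum_single_index]

lemma actB_L0 (a b : BasisL) :
    actB (BasisL.L 0) a b
      = ((-(degB a + degB b) : ℝ) : ℂ) • Finsupp.single (a, b) 1 := by
  rw [actB, bb_L0, bb_L0]
  simp only [pN, Nat.zero_mul, pow_zero, one_smul, Finsupp.smul_single',
    mul_one, tenL_single, tenR_single, Finsupp.smul_single]
  rw [← Finsupp.single_add]
  congr 1
  push_cast
  ring

lemma act_single (a : BasisL) (u : VV) :
    act (Finsupp.single a (1 : ℂ)) u
      = u.sum fun ab cab => cab • actB a ab.1 ab.2 := by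
  rw [act, Finsupp.sum_single_index] <;> simp

lemma act_single_smul (a : BasisL) (c : ℂ) (u : VV) :
    act (Finsupp.single a (1 : ℂ)) (c • u)
      = c • act (Finsupp.single a (1 : ℂ)) u := by
  rw [act_single, act_single, Finsupp.smul_sum,
    Finsupp.sum_smul_index' (by intro i; simp)]
  exact Finsupp.sum_congr fun ab _ => by rw [smul_eq_mul, mul_smul]

lemma act_eq_sum (x : LL) (u : VV) :
    act x u = x.sum fun a ca => ca • act (Finsupp.single a (1 : ℂ)) u := by
  rw [act]
  refine Finsupp.sum_congr fun a _ => ?_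
  rw [act_single, Finsupp.smul_sum]
  exact Finsupp.sum_congr fun ab _ => by rw [smul_smul]

lemma dx_eq_sum (d : LL →ₗ[ℂ] VV) (x : LL) :
    d x = x.sum fun a ca => ca • d (Finsupp.single a 1) := by
  conv_lhs => rw [← Finsupp.sum_single x, map_finsuppSum]
  refine Finsupp.sum_congr fun a _ => ?_
  rw [← map_smul, Finsupp.smul_single', mul_one]

lemma act_L0 (Γ : AddSubgroup ℝ) (s r : ℝ) (v : VV) (h : inCompV Γ s r v) :
    act (bL 0) v = ((-r : ℝ) : ℂ) • v := by
  rw [bL, act_single]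
  have : v.sum (fun ab cab => cab • actB (BasisL.L 0) ab.1 ab.2)
      = v.sum fun ab cab => ((-r : ℝ) : ℂ) • Finsupp.single ab cab := by
    refine Finsupp.sum_congr fun ab hab => ?_
    rw [actB_L0, (h ab hab).2.2]
    simp [Finsupp.smul_single, smul_smul, mul_comm]
  rw [this, ← Finsupp.smul_sum, Finsupp.sum_single]

lemma inL_bL0 (Γ : AddSubgroup ℝ) (s : ℝ) : inL Γ s (bL 0) := by
  intro a ha
  rw [bL, Finsupp.support_single_ne_zero _ one_ne_zero] at ha
  simp only [Finset.mem_singleton] at ha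
  subst ha
  exact zero_mem Γ

lemma isHomogP_bL0 : IsHomogP (bL 0) 0 := by
  intro a ha
  rw [bL, Finsupp.support_single_ne_zero _ one_ne_zero] at ha
  simp only [Finset.mem_singleton] at ha
  subst ha; rfl

lemma inL_single {Γ : AddSubgroup ℝ} {s : ℝ} {a : BasisL} (ha : good Γ s a) :
    inL Γ s (Finsupp.single a (1 : ℂ)) := by
  intro b hb
  rw [Finsupp.support_single_ne_zero _ one_ne_zero] at hb
  simp only [Finset.mem_singleton] at hb
  subst hb; exact ha

lemma isHomogP_single (a : BasisL) : IsHomogP (Finsupp.single a (1 : ℂ)) (pN a) := by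
  intro b hb
  rw [Finsupp.support_single_ne_zero _ one_ne_zero] at hb
  simp only [Finset.mem_singleton] at hb
  subst hb; rfl

lemma inComp_single {Γ : AddSubgroup ℝ} {s : ℝ} {a : BasisL} (ha : good Γ s a) :
    inComp Γ s (degB a) (Finsupp.single a (1 : ℂ)) := by
  intro b hb
  rw [Finsupp.support_single_ne_zero _ one_ne_zero] at hb
  simp only [Finset.mem_singleton] at hb
  subst hb; exact ⟨ha, rfl⟩

lemma br_L0_single (a : BasisL) :
    br (bL 0) (Finsupp.single a (1 : ℂ))
      = ((-degB a : ℝ) : ℂ) • Finsupp.single a 1 := by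
  rw [br, bL, Finsupp.sum_single_index (by simp), Finsupp.sum_single_index (by simp)]
  rw [mul_one, one_smul, bb_L0]

lemma neg_one_pow_congr_mulNat (ι a b : ℕ) (h : a % 2 = b % 2) :
    (-1 : ℂ) ^ (ι * a) = (-1 : ℂ) ^ (ι * b) := by
  have key : ∀ n : ℕ, (-1 : ℂ) ^ n = (-1 : ℂ) ^ (n % 2) := by
    intro n
    conv_lhs => rw [← Nat.div_add_mod n 2]
    rw [pow_add, pow_mul]
    norm_num
  rw [key (ι * a), key (ι * b), Nat.mul_mod, Nat.mul_mod ι b, h]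

/-- The key computation: on a single basis element the derivation is given
by the inner derivation attached to `-t⁻¹ • d (L 0)`. -/
lemma key_lemma (Γ : AddSubgroup ℝ) (s : ℝ) (t : ℝ) (ht0 : t ≠ 0)
    (ι : ℕ) (d : LL →ₗ[ℂ] VV) (hd : IsDer Γ s ι d) (hdeg : HasDeg Γ s t d)
    (a : BasisL) (ha : good Γ s a) :
    d (Finsupp.single a 1)
      = ((-1 : ℂ) ^ (ι * pN a)) •
        act (Finsupp.single a 1) (((-t⁻¹ : ℝ) : ℂ) • d (bL 0)) := by
  set D := d (Finsupp.single a (1 : ℂ)) with hD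
  set A := act (Finsupp.single a (1 : ℂ)) (d (bL 0)) with hA
  have hder := hd.2.2 0 (pN a) (bL 0) (Finsupp.single a 1)
    (inL_bL0 Γ s) (inL_single ha) isHomogP_bL0 (isHomogP_single a)
  rw [br_L0_single, map_smul, Nat.mul_zero, pow_zero, one_smul, Nat.add_zero] at hder
  have hcomp : inCompV Γ s (degB a + t) D := hdeg (degB a) _ (inComp_single ha)
  rw [act_L0 Γ s (degB a + t) D hcomp] at hder
  -- hder : (-degB a) • D = (-(degB a + t)) • D - (-1)^(pN a * ι) • A
  have h3 : ((-1 : ℂ) ^ (pN a * ι)) • A = ((-t : ℝ) : ℂ) • D := by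
    have : ((-1 : ℂ) ^ (pN a * ι)) • A
        = ((-(degB a + t) : ℝ) : ℂ) • D - ((-degB a : ℝ) : ℂ) • D := by
      rw [hder, sub_sub_cancel]
    rw [this, ← sub_smul]
    congr 1
    push_cast
    ring
  have hc : ((-1 : ℂ) ^ (pN a * ι)) * ((-1 : ℂ) ^ (pN a * ι)) = 1 := by
    rw [← pow_add]
    exact Even.neg_one_pow ⟨pN a * ι, rfl⟩
  have htne : ((-t : ℝ) : ℂ) ≠ 0 := by
    simp only [Complex.ofReal_neg, ne_eq, neg_eq_zero, Complex.ofReal_eq_zero]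
    exact ht0
  have hDval : D = ((-t : ℝ) : ℂ)⁻¹ • ((-1 : ℂ) ^ (pN a * ι)) • A := by
    rw [h3, smul_smul, inv_mul_cancel₀ htne, one_smul]
  rw [act_single_smul, hDval]
  rw [smul_smul, smul_smul]
  congr 1
  rw [mul_comm ι (pN a)]
  push_cast
  ring

/-- case s ∈ Γ: for 0 ≠ t ∈ Γ, every homogeneous derivation of
degree t from 𝔏 to 𝔏⊗𝔏 is inner; more precisely, an even such derivation
d_t satisfies d_t(x) = x ∘ (−d_t(L_0)/t) for all x ∈ 𝔏. -/
theorem stmt9 (Γ : AddSubgroup ℝ) (hΓ : Γ ≠ ⊥) (s : ℝ) (hs : s ∈ Γ)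
    (t : ℝ) (ht : t ∈ Γ) (ht0 : t ≠ 0)
    (ι : ℕ) (d : LL →ₗ[ℂ] VV) (hd : IsDer Γ s ι d) (hdeg : HasDeg Γ s t d) :
    (∃ u : VV, inV Γ s u ∧ IsHomogVP u ι ∧
      ∀ (i : ℕ) (x : LL), inL Γ s x → IsHomogP x i →
        d x = ((-1 : ℂ) ^ (ι * i)) • act x u) ∧
    (ι = 0 → ∀ x : LL, inL Γ s x → d x = act x (((-t⁻¹ : ℝ) : ℂ) • d (bL 0))) := by
  set u : VV := ((-t⁻¹ : ℝ) : ℂ) • d (bL 0) with hu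
  have main : ∀ x : LL, inL Γ s x →
      d x = x.sum fun a ca => ca • ((-1 : ℂ) ^ (ι * pN a)) •
        act (Finsupp.single a (1 : ℂ)) u := by
    intro x hx
    rw [dx_eq_sum]
    exact Finsupp.sum_congr fun a haa => by
      rw [key_lemma Γ s t ht0 ι d hd hdeg a (hx a haa)]
  constructor
  · refine ⟨u, ?_, ?_, ?_⟩
    · intro ab hab
      have hab' : ab ∈ (d (bL 0)).support :=
        Finsupp.support_smul hab
      exact hd.1 (bL 0) (inL_bL0 Γ s) ab hab'
    · intro ab hab
      have hab' : ab ∈ (d (bL 0)).support :=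
        Finsupp.support_smul hab
      have := hd.2.1 0 (bL 0) (inL_bL0 Γ s) isHomogP_bL0 ab hab'
      simpa using this
    · intro i x hx hhom
      rw [main x hx, act_eq_sum, Finsupp.smul_sum]
      refine Finsupp.sum_congr fun a haa => ?_
      rw [neg_one_pow_congr_mulNat ι (pN a) i (hhom a haa), smul_comm]
  · intro hι x hx
    subst hι
    rw [main x hx, act_eq_sum]
    refine Finsupp.sum_congr fun a haa => ?_
    rw [Nat.zero_mul, pow_zero, one_smul]
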